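/- In the Majority cross-validation model with n, k, m, P, L̂_i as in the context, let L̂_CV := (1/k)·Σ_{i=1}^{k} L̂_i be the k-fold cross-validation estimator. Then the mean-squared error of cross-validation (around the population risk 1/2 of Majority under uniformly random labels) satisfies E[(L̂_CV − 1/2)²] = ((k−1)/k)·( E[L̂₁·L̂₂] − E[L̂₁]·E[L̂₂] ) + 1/(4n). -/

import Mathlib

open Finset

/-- Fold `i` (for `1 ≤ i ≤ k`) consists of the indices `{(i-1)·m, …, i·m - 1}`. -/
def cvFold (n m i : ℕ) : Finset (Fin n) :=
  Finset.univ.filter fun j => (i - 1) * m ≤ (j : ℕ) ∧ (j : ℕ) < i * m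

/-- `X_i(ω)`: number of 1-labels inside cvFold `i`. -/
def Xc (n m i : ℕ) (ω : Fin n → Bool) : ℕ :=
  ((cvFold n m i).filter fun j => ω j = true).card

/-- `Y_{-i}(ω)`: number of 1-labels outside cvFold `i`. -/
def Yc (n m i : ℕ) (ω : Fin n → Bool) : ℕ :=
  ((Finset.univ \ cvFold n m i).filter fun j => ω j = true).card

/-- Hold-out error on cvFold `i` of the Majority algorithm trained on the complement of
cvFold `i`: it predicts the constant label `1` iff `Y_{-i} > (n-m)/2`, so the hold-out
error is `(X_i/m)·1{Y_{-i} ≤ (n-m)/2} + ((m-X_i)/m)·1{Y_{-i} > (n-m)/2}`. -/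
noncomputable def Lhat (n m i : ℕ) (ω : Fin n → Bool) : ℝ :=
  if ((n : ℝ) - m) / 2 < (Yc n m i ω : ℝ) then ((m : ℝ) - Xc n m i ω) / m
  else (Xc n m i ω : ℝ) / m

/-- Expectation with respect to the uniform probability measure on `Fin n → Bool`
(i.e. `n` i.i.d. fair-coin binary labels). -/
noncomputable def expec (n : ℕ) (f : (Fin n → Bool) → ℝ) : ℝ :=
  (∑ ω : Fin n → Bool, f ω) / 2 ^ n

/-! ### Expectation basics -/

lemma expec_add (n : ℕ) (f g : (Fin n → Bool) → ℝ) :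
    expec n (fun ω => f ω + g ω) = expec n f + expec n g := by
  simp [expec, Finset.sum_add_distrib, add_div]

lemma expec_const (n : ℕ) (c : ℝ) : expec n (fun _ => c) = c := by
  simp only [expec, Finset.sum_const, Finset.card_univ, Fintype.card_fun,
    Fintype.card_bool, Fintype.card_fin, nsmul_eq_mul]
  rw [mul_comm, mul_div_assoc]
  norm_num

lemma expec_const_mul (n : ℕ) (c : ℝ) (f : (Fin n → Bool) → ℝ) :
    expec n (fun ω => c * f ω) = c * expec n f := by
  simp [expec, ← Finset.mul_sum, mul_div_assoc]

lemma expec_sum (n : ℕ) {ι : Type*} (s : Finset ι) (f : ι → (Fin n → Bool) → ℝ) :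
    expec n (fun ω => ∑ i ∈ s, f i ω) = ∑ i ∈ s, expec n (f i) := by
  simp only [expec, Finset.sum_div]
  rw [Finset.sum_comm]

lemma expec_congr (n : ℕ) (f g : (Fin n → Bool) → ℝ) (h : ∀ ω, f ω = g ω) :
    expec n f = expec n g := by simp [expec, h]

lemma expec_comp_equiv (n : ℕ) (e : (Fin n → Bool) ≃ (Fin n → Bool)) (f : (Fin n → Bool) → ℝ) :
    expec n (fun ω => f (e ω)) = expec n f := by
  simp [expec, Equiv.sum_comp e f]

lemma expec_prod (n : ℕ) (g : Fin n → Bool → ℝ) :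
    expec n (fun ω => ∏ i, g i (ω i)) = ∏ i, ((g i true + g i false) / 2) := by
  rw [expec]
  have : ∑ ω : Fin n → Bool, ∏ i, g i (ω i)
      = ∏ i, ∑ b : Bool, g i b := by
    rw [Finset.prod_univ_sum]
    rw [Fintype.piFinset_univ]
  rw [this]
  rw [Finset.prod_div_distrib]
  congr 1
  · exact Finset.prod_congr rfl (by simp [Fintype.sum_bool])
  · simp

/-! ### Indicators -/

/-- indicator of coordinate j -/
def ind (n : ℕ) (j : Fin n) (ω : Fin n → Bool) : ℝ := if ω j = true then 1 else 0

lemma expec_ind_prod (n : ℕ) (s : Finset (Fin n)) :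
    expec n (fun ω => ∏ j ∈ s, ind n j ω) = (1 / 2) ^ s.card := by
  have h1 : ∀ ω : Fin n → Bool, (∏ j ∈ s, ind n j ω)
      = ∏ i : Fin n, (fun i b => if i ∈ s then (if b = true then (1:ℝ) else 0) else 1) i (ω i) := by
    intro ω
    rw [show (∏ i : Fin n, (fun i b => if i ∈ s then (if b = true then (1:ℝ) else 0) else 1) i (ω i))
        = ∏ i : Fin n, (if i ∈ s then ind n i ω else 1) from
      Finset.prod_congr rfl fun i _ => by by_cases h : i ∈ s <;> simp [ind, h],
      Finset.prod_ite_mem Finset.univ s fun j => ind n j ω, Finset.univ_inter]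
  rw [expec_congr n _ _ h1, expec_prod n (fun i b => if i ∈ s then (if b = true then (1:ℝ) else 0) else 1)]
  have : ∀ i : Fin n, ((((if i ∈ s then (if (true:Bool) = true then (1:ℝ) else 0) else 1) +
      (if i ∈ s then (if (false:Bool) = true then (1:ℝ) else 0) else 1)) / 2 : ℝ))
      = if i ∈ s then (1/2 : ℝ) else 1 := by
    intro i; by_cases h : i ∈ s <;> norm_num [h]
  rw [Finset.prod_congr rfl fun i _ => this i, Finset.prod_ite_mem Finset.univ s fun _ => (1/2:ℝ),
    Finset.univ_inter, Finset.prod_const]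

lemma expec_ind (n : ℕ) (j : Fin n) : expec n (ind n j) = 1 / 2 := by
  have := expec_ind_prod n {j}
  simpa using this

lemma expec_ind_mul (n : ℕ) (j l : Fin n) :
    expec n (fun ω => ind n j ω * ind n l ω) = if j = l then 1/2 else 1/4 := by
  by_cases h : j = l
  · subst h
    rw [if_pos rfl, ← expec_ind n j]
    exact expec_congr n _ _ fun ω => by unfold ind; by_cases hb : ω j = true <;> simp [hb]
  · rw [if_neg h]
    have := expec_ind_prod n {j, l}
    rw [Finset.card_insert_of_notMem (by simpa using h), Finset.card_singleton] at this
    rw [expec_congr n _ _ fun ω => (Finset.prod_pair h (f := fun x => ind n x ω)).symm, this]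
    norm_num

/-! ### Fold combinatorics -/

/-- total number of ones -/
def Tc (n : ℕ) (ω : Fin n → Bool) : ℕ := (Finset.univ.filter fun j => ω j = true).card

lemma mem_cvFold {n m : ℕ} (hm : 0 < m) {a : ℕ} (ha1 : 1 ≤ a)
    (x : Fin n) : x ∈ cvFold n m a ↔ (x : ℕ) / m = a - 1 := by
  simp only [cvFold, Finset.mem_filter, Finset.mem_univ, true_and]
  constructor
  · rintro ⟨h1, h2⟩
    exact Nat.div_eq_of_lt_le h1 (by rwa [Nat.sub_add_cancel ha1])
  · intro h
    constructor
    · calc (a-1) * m = (x:ℕ)/m * m := by rw [h]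
        _ ≤ x := Nat.div_mul_le_self _ _
    · have h2 : (x:ℕ) < m * ((x:ℕ)/m + 1) := Nat.lt_mul_div_succ _ hm
      rw [h, Nat.sub_add_cancel ha1, mul_comm] at h2
      exact h2

lemma card_cvFold {n k m : ℕ} (hnm : n = k * m) {a : ℕ} (ha1 : 1 ≤ a)
    (hak : a ≤ k) : (cvFold n m a).card = m := by
  have hcard : (Finset.Ico ((a-1)*m) (a*m)).card = m := by
    rw [Nat.card_Ico]
    have h1 : (a-1)*m ≤ a*m := Nat.mul_le_mul_right m (Nat.sub_le a 1)
    have h2 : ((a:ℤ)-1)*m = a*m - m := by ring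
    zify [h1, ha1]
    omega
  conv_rhs => rw [← hcard]
  apply Finset.card_bij (fun (x : Fin n) _ => (x : ℕ))
  · intro x hx
    simp only [cvFold, Finset.mem_filter, Finset.mem_univ, true_and] at hx
    simpa [Finset.mem_Ico] using hx
  · intro x _ y _ h; exact Fin.ext h
  · intro y hy
    simp only [Finset.mem_Ico] at hy
    have hyn : y < n := lt_of_lt_of_le hy.2 (by rw [hnm]; exact Nat.mul_le_mul_right m hak)
    exact ⟨⟨y, hyn⟩, by simp [cvFold, hy.1, hy.2], rfl⟩

lemma Xc_le {n m i : ℕ} (ω : Fin n → Bool) : Xc n m i ω ≤ (cvFold n m i).card :=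
  Finset.card_filter_le _ _

lemma Yc_eq {n m i : ℕ} (ω : Fin n → Bool) : Yc n m i ω = Tc n ω - Xc n m i ω := by
  have h : Yc n m i ω + Xc n m i ω = Tc n ω := by
    rw [Yc, Xc, Tc, ← Finset.card_union_of_disjoint, ← Finset.filter_union,
      Finset.sdiff_union_of_subset (Finset.subset_univ _)]
    exact Finset.disjoint_filter_filter (Finset.sdiff_disjoint)
  omega

lemma Xc_add_Yc {n m i : ℕ} (ω : Fin n → Bool) : Xc n m i ω + Yc n m i ω = Tc n ω := by
  have h : Yc n m i ω + Xc n m i ω = Tc n ω := by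
    rw [Yc, Xc, Tc, ← Finset.card_union_of_disjoint, ← Finset.filter_union,
      Finset.sdiff_union_of_subset (Finset.subset_univ _)]
    exact Finset.disjoint_filter_filter (Finset.sdiff_disjoint)
  omega

lemma Xc_cast {n m i : ℕ} (ω : Fin n → Bool) :
    (Xc n m i ω : ℝ) = ∑ j ∈ cvFold n m i, ind n j ω := by
  rw [Xc, Finset.card_filter]
  push_cast
  exact Finset.sum_congr rfl fun j _ => by simp [ind]

/-! ### Moments of `Xc` -/

lemma expec_Xc {n k m : ℕ} (hnm : n = k * m) {a : ℕ} (ha1 : 1 ≤ a) (hak : a ≤ k) :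
    expec n (fun ω => (Xc n m a ω : ℝ)) = m / 2 := by
  rw [expec_congr n _ _ fun ω => Xc_cast ω, expec_sum]
  rw [Finset.sum_congr rfl fun j _ => expec_ind n j, Finset.sum_const,
    card_cvFold hnm ha1 hak, nsmul_eq_mul]
  ring

lemma expec_Xc_sq {n k m : ℕ} (hnm : n = k * m) {a : ℕ} (ha1 : 1 ≤ a) (hak : a ≤ k) :
    expec n (fun ω => (Xc n m a ω : ℝ) ^ 2) = (m : ℝ) / 4 + (m : ℝ) ^ 2 / 4 := by
  have h1 : ∀ ω, (Xc n m a ω : ℝ) ^ 2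
      = ∑ j ∈ cvFold n m a, ∑ l ∈ cvFold n m a, ind n j ω * ind n l ω := by
    intro ω
    rw [sq, Xc_cast, Finset.sum_mul_sum]
  rw [expec_congr n _ _ h1, expec_sum]
  have h2 : ∀ j ∈ cvFold n m a, expec n (fun ω => ∑ l ∈ cvFold n m a, ind n j ω * ind n l ω)
      = (m : ℝ) / 4 + 1 / 4 := by
    intro j hj
    rw [expec_sum, Finset.sum_congr rfl fun l _ => expec_ind_mul n j l]
    rw [Finset.sum_congr rfl (fun l _ => by
      rw [show (if j = l then (1/2:ℝ) else 1/4) = 1/4 + (if j = l then (1/4:ℝ) else 0) by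
        by_cases h : j = l <;> norm_num [h]])]
    rw [Finset.sum_add_distrib, Finset.sum_ite_eq (cvFold n m a) j fun _ => (1/4:ℝ), if_pos hj,
      Finset.sum_const, card_cvFold hnm ha1 hak, nsmul_eq_mul]
    ring
  rw [Finset.sum_congr rfl h2, Finset.sum_const, card_cvFold hnm ha1 hak, nsmul_eq_mul]
  ring

/-! ### Flip involution on a fold -/

def flipFold (n m i : ℕ) : (Fin n → Bool) ≃ (Fin n → Bool) where
  toFun ω := fun j => if j ∈ cvFold n m i then !ω j else ω j
  invFun ω := fun j => if j ∈ cvFold n m i then !ω j else ω j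
  left_inv ω := by funext j; by_cases h : j ∈ cvFold n m i <;> simp [h]
  right_inv ω := by funext j; by_cases h : j ∈ cvFold n m i <;> simp [h]

lemma Xc_flip (n m i : ℕ) (ω : Fin n → Bool) :
    Xc n m i (flipFold n m i ω) = (cvFold n m i).card - Xc n m i ω := by
  unfold Xc flipFold
  simp only [Equiv.coe_fn_mk]
  rw [Finset.filter_congr (fun j hj => by simp [hj] : ∀ j ∈ cvFold n m i,
    ((if j ∈ cvFold n m i then !ω j else ω j) = true) ↔ ¬(ω j = true))]
  rw [Finset.filter_not, Finset.card_sdiff_of_subset (Finset.filter_subset _ _)]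

lemma Yc_flip (n m i : ℕ) (ω : Fin n → Bool) :
    Yc n m i (flipFold n m i ω) = Yc n m i ω := by
  unfold Yc flipFold
  simp only [Equiv.coe_fn_mk]
  apply Finset.card_nbij id
  · intro x hx
    simp only [Finset.mem_coe, id_eq, Finset.mem_filter, Finset.mem_sdiff, Finset.mem_univ, true_and] at hx ⊢
    obtain ⟨h1, h2⟩ := hx
    rw [if_neg h1] at h2
    exact ⟨h1, h2⟩
  · intro x hx y hy h; exact h
  · intro x hx
    simp only [Finset.coe_filter, Set.mem_image, Set.mem_setOf_eq, Finset.mem_sdiff,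
      Finset.mem_univ, true_and] at hx ⊢
    exact ⟨x, ⟨hx.1, by rw [if_neg hx.1]; exact hx.2⟩, rfl⟩

/-! ### Per-fold moments of `Lhat` -/

lemma expec_Lhat {n k m : ℕ} (hm : 0 < m) (hnm : n = k * m) {a : ℕ}
    (ha1 : 1 ≤ a) (hak : a ≤ k) : expec n (Lhat n m a) = 1 / 2 := by
  have hm' : (m : ℝ) ≠ 0 := Nat.cast_ne_zero.mpr hm.ne'
  have hflip : ∀ ω, Lhat n m a ω + Lhat n m a (flipFold n m a ω) = 1 := by
    intro ω
    have hXle : Xc n m a ω ≤ m := (Xc_le ω).trans_eq (card_cvFold hnm ha1 hak)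
    have hX : Xc n m a (flipFold n m a ω) = m - Xc n m a ω := by
      rw [Xc_flip, card_cvFold hnm ha1 hak]
    unfold Lhat
    rw [Yc_flip, hX]
    by_cases h : ((n:ℝ) - m) / 2 < (Yc n m a ω : ℝ)
    · rw [if_pos h, if_pos h]; push_cast [Nat.cast_sub hXle]; field_simp; ring
    · rw [if_neg h, if_neg h]; push_cast [Nat.cast_sub hXle]; field_simp; ring
  have h2 := expec_comp_equiv n (flipFold n m a) (Lhat n m a)
  have h3 : expec n (fun ω => Lhat n m a ω + Lhat n m a (flipFold n m a ω)) = 1 := by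
    rw [expec_congr n _ _ hflip, expec_const]
  rw [expec_add] at h3
  rw [h2] at h3
  linarith

lemma expec_Lhat_sq {n k m : ℕ} (hm : 0 < m) (hnm : n = k * m) {a : ℕ}
    (ha1 : 1 ≤ a) (hak : a ≤ k) :
    expec n (fun ω => Lhat n m a ω ^ 2) = 1 / 4 + 1 / (4 * m) := by
  have hm' : (m : ℝ) ≠ 0 := Nat.cast_ne_zero.mpr hm.ne'
  have hflip : ∀ ω, Lhat n m a ω ^ 2 + Lhat n m a (flipFold n m a ω) ^ 2
      = (2 / (m:ℝ)^2) * (Xc n m a ω : ℝ)^2 + ((-2 / (m:ℝ)) * (Xc n m a ω : ℝ) + 1) := by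
    intro ω
    have hXle : Xc n m a ω ≤ m := (Xc_le ω).trans_eq (card_cvFold hnm ha1 hak)
    have hX : Xc n m a (flipFold n m a ω) = m - Xc n m a ω := by
      rw [Xc_flip, card_cvFold hnm ha1 hak]
    unfold Lhat
    rw [Yc_flip, hX]
    by_cases h : ((n:ℝ) - m) / 2 < (Yc n m a ω : ℝ)
    · rw [if_pos h, if_pos h]; push_cast [Nat.cast_sub hXle]; field_simp; ring
    · rw [if_neg h, if_neg h]; push_cast [Nat.cast_sub hXle]; field_simp; ring
  have h2 := expec_comp_equiv n (flipFold n m a) (fun ω => Lhat n m a ω ^ 2)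
  have h3 : expec n (fun ω => Lhat n m a ω ^ 2 + Lhat n m a (flipFold n m a ω) ^ 2)
      = (2 / (m:ℝ)^2) * ((m:ℝ)/4 + (m:ℝ)^2/4) + ((-2 / (m:ℝ)) * ((m:ℝ)/2) + 1) := by
    rw [expec_congr n _ _ hflip, expec_add, expec_const_mul, expec_add, expec_const_mul,
      expec_const, expec_Xc_sq hnm ha1 hak, expec_Xc hnm ha1 hak]
  rw [expec_add] at h3
  rw [h2] at h3
  have : expec n (fun ω => Lhat n m a ω ^ 2)
      = ((2 / (m:ℝ)^2) * ((m:ℝ)/4 + (m:ℝ)^2/4) + ((-2 / (m:ℝ)) * ((m:ℝ)/2) + 1)) / 2 := by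
    linarith
  rw [this]
  field_simp
  ring


/-! ### Block permutation symmetry -/

def blockE (n k m : ℕ) (h : n = k * m) : Fin n ≃ Fin k × Fin m :=
  (finCongr h).trans finProdFinEquiv.symm

def blockPerm (n k m : ℕ) (h : n = k * m) (τ : Equiv.Perm (Fin k)) : Equiv.Perm (Fin n) :=
  (blockE n k m h).trans ((Equiv.prodCongr τ (Equiv.refl (Fin m))).trans (blockE n k m h).symm)

lemma blockE_fst_val {n k m : ℕ} (h : n = k * m) (x : Fin n) :
    (((blockE n k m h) x).1 : ℕ) = (x : ℕ) / m := by
  simp [blockE, finProdFinEquiv, Fin.coe_divNat]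

lemma blockPerm_div {n k m : ℕ} (hm : 0 < m) (h : n = k * m) (τ : Equiv.Perm (Fin k))
    (x : Fin n) : ((blockPerm n k m h τ) x : ℕ) / m = (τ ((blockE n k m h) x).1 : ℕ) := by
  have : ((blockPerm n k m h τ) x : ℕ)
      = (((blockE n k m h) x).2 : ℕ) + m * (τ ((blockE n k m h) x).1 : ℕ) := by
    simp [blockPerm, blockE, finProdFinEquiv]
  rw [this, Nat.add_mul_div_left _ _ hm, Nat.div_eq_of_lt ((blockE n k m h) x).2.isLt, zero_add]

lemma mem_cvFold_blockPerm {n k m : ℕ} (hm : 0 < m) (h : n = k * m) (τ : Equiv.Perm (Fin k))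
    (A : Fin k) (x : Fin n) :
    x ∈ cvFold n m ((A : ℕ) + 1) ↔ (blockPerm n k m h τ) x ∈ cvFold n m (((τ A) : ℕ) + 1) := by
  rw [mem_cvFold hm (by omega), mem_cvFold hm (by omega), Nat.add_sub_cancel, Nat.add_sub_cancel,
    blockPerm_div hm h τ x]
  constructor
  · intro hx
    have : ((blockE n k m h) x).1 = A := Fin.ext (by rw [blockE_fst_val, hx])
    rw [this]
  · intro hx
    have : τ ((blockE n k m h) x).1 = τ A := Fin.ext hx
    have := τ.injective this
    rw [← blockE_fst_val h x, this]

lemma Xc_blockPerm {n k m : ℕ} (hm : 0 < m) (h : n = k * m) (τ : Equiv.Perm (Fin k))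
    (A : Fin k) (ω : Fin n → Bool) :
    Xc n m ((A : ℕ) + 1) (fun j => ω ((blockPerm n k m h τ) j))
      = Xc n m (((τ A) : ℕ) + 1) ω := by
  apply Finset.card_bij (fun x _ => (blockPerm n k m h τ) x)
  · intro x hx
    simp only [Finset.mem_filter] at hx ⊢
    exact ⟨(mem_cvFold_blockPerm hm h τ A x).mp hx.1, hx.2⟩
  · intro x _ y _ hxy; exact (blockPerm n k m h τ).injective hxy
  · intro y hy
    simp only [Finset.mem_filter] at hy
    refine ⟨(blockPerm n k m h τ).symm y, ?_, by simp⟩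
    simp only [Finset.mem_filter]
    constructor
    · rw [mem_cvFold_blockPerm hm h τ A, Equiv.apply_symm_apply]
      exact hy.1
    · rw [Equiv.apply_symm_apply]; exact hy.2

lemma Tc_comp {n : ℕ} (σ : Equiv.Perm (Fin n)) (ω : Fin n → Bool) :
    Tc n (fun j => ω (σ j)) = Tc n ω := by
  apply Finset.card_bij (fun x _ => σ x)
  · intro x hx; simpa using (by simpa using hx : ω (σ x) = true)
  · intro x _ y _ hxy; exact σ.injective hxy
  · intro y hy
    exact ⟨σ.symm y, by simpa using (by simpa using hy : ω y = true) ▸ (by simp), by simp⟩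

lemma Lhat_blockPerm {n k m : ℕ} (hm : 0 < m) (h : n = k * m) (τ : Equiv.Perm (Fin k))
    (A : Fin k) (ω : Fin n → Bool) :
    Lhat n m ((A : ℕ) + 1) (fun j => ω ((blockPerm n k m h τ) j))
      = Lhat n m (((τ A) : ℕ) + 1) ω := by
  have hX := Xc_blockPerm hm h τ A ω
  have hY : Yc n m ((A : ℕ) + 1) (fun j => ω ((blockPerm n k m h τ) j))
      = Yc n m (((τ A) : ℕ) + 1) ω := by
    have h1 := Xc_add_Yc (n := n) (m := m) (i := (A : ℕ) + 1)
      (fun j => ω ((blockPerm n k m h τ) j))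
    have h2 := Xc_add_Yc (n := n) (m := m) (i := ((τ A) : ℕ) + 1) ω
    have h3 := Tc_comp (blockPerm n k m h τ) ω
    omega
  unfold Lhat
  rw [hX, hY]

lemma exists_perm_pair {k : ℕ} (hk : 2 ≤ k) (a b : Fin k) (hab : a ≠ b) :
    ∃ τ : Equiv.Perm (Fin k), τ ⟨0, by omega⟩ = a ∧ τ ⟨1, by omega⟩ = b := by
  set A0 : Fin k := ⟨0, by omega⟩
  set A1 : Fin k := ⟨1, by omega⟩
  have h01 : A0 ≠ A1 := by simp [A0, A1, Fin.ext_iff]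
  set c : Fin k := Equiv.swap A0 a b
  have hc0 : c ≠ A0 := by
    simp only [c]
    intro hc
    apply hab
    have := congrArg (Equiv.swap A0 a) hc
    rw [Equiv.swap_apply_self, Equiv.swap_apply_left] at this
    exact this.symm
  refine ⟨(Equiv.swap A1 c).trans (Equiv.swap A0 a), ?_, ?_⟩
  · simp only [Equiv.trans_apply]
    rw [Equiv.swap_apply_of_ne_of_ne h01 (Ne.symm hc0), Equiv.swap_apply_left]
  · simp only [Equiv.trans_apply]
    rw [Equiv.swap_apply_left, Equiv.swap_apply_self]

lemma expec_Lhat_mul_symm {n k m : ℕ} (hm : 0 < m) (h : n = k * m) (hk : 2 ≤ k)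
    {i j : ℕ} (hi1 : 1 ≤ i) (hik : i ≤ k) (hj1 : 1 ≤ j) (hjk : j ≤ k) (hij : i ≠ j) :
    expec n (fun ω => Lhat n m i ω * Lhat n m j ω)
      = expec n (fun ω => Lhat n m 1 ω * Lhat n m 2 ω) := by
  set a : Fin k := ⟨i - 1, by omega⟩
  set b : Fin k := ⟨j - 1, by omega⟩
  have hab : a ≠ b := by simp [a, b, Fin.ext_iff]; omega
  obtain ⟨τ, hτ0, hτ1⟩ := exists_perm_pair hk a b hab
  set σ := blockPerm n k m h τ
  set e : (Fin n → Bool) ≃ (Fin n → Bool) :=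
    Equiv.arrowCongr σ.symm (Equiv.refl Bool)
  have key : ∀ ω : Fin n → Bool,
      Lhat n m 1 (e ω) * Lhat n m 2 (e ω) = Lhat n m i ω * Lhat n m j ω := by
    intro ω
    have he : e ω = fun x => ω (σ x) := by
      funext x; simp [e, Equiv.arrowCongr]
    rw [he]
    have h1 : Lhat n m ((⟨0, by omega⟩ : Fin k) : ℕ).succ (fun x => ω (σ x))
        = Lhat n m i ω := by
      have := Lhat_blockPerm hm h τ ⟨0, by omega⟩ ω
      rw [hτ0] at this
      simpa [a, Nat.succ_eq_add_one, Nat.sub_add_cancel hi1] using this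
    have h2 : Lhat n m ((⟨1, by omega⟩ : Fin k) : ℕ).succ (fun x => ω (σ x))
        = Lhat n m j ω := by
      have := Lhat_blockPerm hm h τ ⟨1, by omega⟩ ω
      rw [hτ1] at this
      simpa [b, Nat.succ_eq_add_one, Nat.sub_add_cancel hj1] using this
    simp only [Nat.succ_eq_add_one] at h1 h2
    rw [show (0:ℕ) + 1 = 1 from rfl] at h1
    rw [show (1:ℕ) + 1 = 2 from rfl] at h2
    rw [h1, h2]
  rw [← expec_comp_equiv n e (fun ω => Lhat n m 1 ω * Lhat n m 2 ω)]
  exact (expec_congr n _ _ key).symm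

/-! ### Main theorem -/

theorem majority_mse_decomposition
    (n k : ℕ) (hn : 2 ≤ n) (hk : 2 ≤ k) (hkn : k ∣ n) (m : ℕ) (hm : m = n / k) :
    expec n (fun ω => ((1 / (k : ℝ)) * ∑ i ∈ Finset.Icc 1 k, Lhat n m i ω - 1 / 2) ^ 2)
      = (((k : ℝ) - 1) / k) *
          (expec n (fun ω => Lhat n m 1 ω * Lhat n m 2 ω)
            - expec n (Lhat n m 1) * expec n (Lhat n m 2))
        + 1 / (4 * n) := by
  have h : n = k * m := by
    rw [hm, Nat.mul_div_cancel' hkn]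
  have hm0 : 0 < m := by
    rcases Nat.eq_zero_or_pos m with h0 | h0
    · rw [h0, mul_zero] at h; omega
    · exact h0
  have hkR : (k : ℝ) ≠ 0 := Nat.cast_ne_zero.mpr (by omega)
  have hmR : (m : ℝ) ≠ 0 := Nat.cast_ne_zero.mpr hm0.ne'
  set C : ℝ := expec n (fun ω => Lhat n m 1 ω * Lhat n m 2 ω) with hC
  set D : ℝ := 1 / 4 + 1 / (4 * (m : ℝ)) with hD
  -- pointwise expansion of the square
  have hpt : ∀ ω : Fin n → Bool,
      ((1 / (k : ℝ)) * ∑ i ∈ Finset.Icc 1 k, Lhat n m i ω - 1 / 2) ^ 2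
        = (1 / (k : ℝ)^2) *
            (∑ i ∈ Finset.Icc 1 k, ∑ j ∈ Finset.Icc 1 k, Lhat n m i ω * Lhat n m j ω)
          + ((-1 / (k : ℝ)) * (∑ i ∈ Finset.Icc 1 k, Lhat n m i ω) + 1 / 4) := by
    intro ω
    rw [← Finset.sum_mul_sum]
    field_simp
    ring
  rw [expec_congr n _ _ hpt, expec_add, expec_const_mul, expec_add, expec_const_mul, expec_const,
    expec_sum, expec_sum]
  -- evaluate single expectations
  have hsingle : ∀ i ∈ Finset.Icc 1 k, expec n (Lhat n m i) = 1 / 2 := by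
    intro i hi
    rw [Finset.mem_Icc] at hi
    exact expec_Lhat hm0 h hi.1 hi.2
  -- evaluate pair expectations
  have hpair : ∀ i ∈ Finset.Icc 1 k,
      expec n (fun ω => ∑ j ∈ Finset.Icc 1 k, Lhat n m i ω * Lhat n m j ω)
        = (k : ℝ) * C + (D - C) := by
    intro i hi
    rw [Finset.mem_Icc] at hi
    rw [expec_sum]
    have hterm : ∀ j ∈ Finset.Icc 1 k,
        expec n (fun ω => Lhat n m i ω * Lhat n m j ω)
          = C + (if i = j then D - C else 0) := by
      intro j hj
      rw [Finset.mem_Icc] at hj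
      by_cases hij : i = j
      · subst hij
        rw [if_pos rfl]
        have : expec n (fun ω => Lhat n m i ω * Lhat n m i ω)
            = expec n (fun ω => Lhat n m i ω ^ 2) :=
          expec_congr n _ _ fun ω => (sq (Lhat n m i ω)).symm
        rw [this, expec_Lhat_sq hm0 h hi.1 hi.2, hD]
        ring
      · rw [if_neg hij, expec_Lhat_mul_symm hm0 h hk hi.1 hi.2 hj.1 hj.2 hij]
        simp [hC]
    rw [Finset.sum_congr rfl hterm, Finset.sum_add_distrib,
      Finset.sum_ite_eq (Finset.Icc 1 k) i fun _ => D - C,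
      if_pos (Finset.mem_Icc.mpr hi), Finset.sum_const, Nat.card_Icc, nsmul_eq_mul]
    push_cast
    ring
  rw [Finset.sum_congr rfl hpair, Finset.sum_congr rfl hsingle, Finset.sum_const,
    Finset.sum_const, Nat.card_Icc, Nat.add_sub_cancel, nsmul_eq_mul, nsmul_eq_mul]
  -- now pure arithmetic
  rw [expec_Lhat hm0 h (le_refl 1) (by omega), expec_Lhat hm0 h (by omega) hk]
  have hnR : (n : ℝ) = (k : ℝ) * m := by rw [h]; push_cast; ring
  rw [hD, hnR]
  field_simp
  ring
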